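/- arXiv:2103.01102 — 5 statements merged into one kernel-verified Lean document; each statement's English description precedes it below -/
import Mathlib

section
/- If a + |b| < 0, then every complex root λ of the characteristic equation λ = a + b·e^{-λ} satisfies Re(λ) < 0. -/
theorem root_re_neg_of_a_add_abs_b_neg (a b : ℝ) (h : a + |b| < 0) :
    ∀ lam : ℂ, lam = (a : ℂ) + (b : ℂ) * Complex.exp (-lam) → lam.re < 0 := by
  intro lam heq
  by_contra hre
  push_neg at hre
  have hre' : lam.re = a + b * (Complex.exp (-lam)).re := by
    conv_lhs => rw [heq]
    simp [Complex.add_re, Complex.mul_re, Complex.ofReal_re, Complex.ofReal_im]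
  have habs : ‖Complex.exp (-lam)‖ = Real.exp (-lam.re) := by
    rw [Complex.norm_exp]; simp
  have h1 : |(Complex.exp (-lam)).re| ≤ Real.exp (-lam.re) := by
    rw [← habs]; exact Complex.abs_re_le_norm _
  have h2 : Real.exp (-lam.re) ≤ 1 := by
    rw [Real.exp_le_one_iff]; linarith
  have h3 : b * (Complex.exp (-lam)).re ≤ |b| := by
    calc b * (Complex.exp (-lam)).re ≤ |b * (Complex.exp (-lam)).re| := le_abs_self _
      _ = |b| * |(Complex.exp (-lam)).re| := abs_mul _ _
      _ ≤ |b| * 1 := by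
          exact mul_le_mul_of_nonneg_left (h1.trans h2) (abs_nonneg b)
      _ = |b| := mul_one _
  linarith
end

section
/- If -π/2 < b < 0, then every complex root λ of λ = b·e^{-λ} satisfies Re(λ) < 0. -/
theorem root_re_neg_of_b_in_stability_interval (b : ℝ)
    (h1 : -(Real.pi / 2) < b) (h2 : b < 0) :
    ∀ lam : ℂ, lam = (b : ℂ) * Complex.exp (-lam) → lam.re < 0 := by
  intro lam heq
  by_contra hx
  push_neg at hx
  have hx' : Real.exp (-lam.re) ≤ 1 := by
    rw [Real.exp_le_one_iff]; linarith
  have habs : ‖lam‖ = |b| * Real.exp (-lam.re) := by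
    conv_lhs => rw [heq]
    rw [norm_mul, Complex.norm_exp, Complex.norm_real, Real.norm_eq_abs, Complex.neg_re]
  have hyb : |lam.im| < Real.pi / 2 := by
    calc |lam.im| ≤ ‖lam‖ := Complex.abs_im_le_norm lam
    _ = |b| * Real.exp (-lam.re) := habs
    _ ≤ |b| * 1 := by nlinarith [Real.exp_pos (-lam.re), abs_nonneg b]
    _ < Real.pi / 2 := by rw [mul_one, abs_of_neg h2]; linarith
  have hyb' := abs_lt.mp hyb
  have hcos : 0 < Real.cos lam.im :=
    Real.cos_pos_of_mem_Ioo ⟨by linarith [hyb'.1], hyb'.2⟩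
  have hre : lam.re = b * (Real.exp (-lam.re) * Real.cos lam.im) := by
    have := congrArg Complex.re heq
    simpa [Complex.exp_re, Complex.neg_re, Complex.neg_im, Real.cos_neg,
      mul_assoc] using this
  nlinarith [mul_pos (Real.exp_pos (-lam.re)) hcos]
end

section
/- If b ≤ -π/2, then the characteristic equation λ = b·e^{-λ} has a complex root λ with Re(λ) ≥ 0. -/
open Real Filter Set

private noncomputable def fAux (y : ℝ) : ℝ :=
  y / Real.sin y * Real.exp (-y * Real.cos y / Real.sin y)

private lemma fAux_tendsto : Tendsto fAux (nhdsWithin Real.pi (Set.Iio Real.pi)) atTop := by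
  have hsin : Tendsto Real.sin (nhdsWithin Real.pi (Set.Iio Real.pi)) (nhdsWithin 0 (Set.Ioi 0)) := by
    apply tendsto_nhdsWithin_of_tendsto_nhds_of_eventually_within _
    · have := Real.continuous_sin.continuousAt (x := Real.pi)
      simpa [Real.sin_pi] using this.tendsto.mono_left nhdsWithin_le_nhds
    · filter_upwards [Ioo_mem_nhdsLT_of_mem (Set.mem_Ioc.mpr ⟨(half_lt_self Real.pi_pos), le_refl _⟩)]
        with y hy
      exact Real.sin_pos_of_pos_of_lt_pi (lt_trans (by positivity) hy.1) hy.2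
  have hinv : Tendsto (fun y => (Real.sin y)⁻¹) (nhdsWithin Real.pi (Set.Iio Real.pi)) atTop :=
    hsin.inv_tendsto_nhdsGT_zero
  have hid : Tendsto (fun y : ℝ => y) (nhdsWithin Real.pi (Set.Iio Real.pi)) (nhds Real.pi) :=
    tendsto_id.mono_left nhdsWithin_le_nhds
  have h1 : Tendsto (fun y => y / Real.sin y) (nhdsWithin Real.pi (Set.Iio Real.pi)) atTop := by
    simp only [div_eq_mul_inv]
    exact Filter.Tendsto.pos_mul_atTop Real.pi_pos hid hinv
  have hnum : Tendsto (fun y => -y * Real.cos y) (nhdsWithin Real.pi (Set.Iio Real.pi))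
      (nhds Real.pi) := by
    have : Tendsto (fun y => -y * Real.cos y) (nhds Real.pi) (nhds (-Real.pi * Real.cos Real.pi)) :=
      (tendsto_id.neg.mul Real.continuous_cos.continuousAt.tendsto)
    simpa [Real.cos_pi] using this.mono_left nhdsWithin_le_nhds
  have h2 : Tendsto (fun y => -y * Real.cos y / Real.sin y)
      (nhdsWithin Real.pi (Set.Iio Real.pi)) atTop := by
    simp only [div_eq_mul_inv]
    exact Filter.Tendsto.pos_mul_atTop Real.pi_pos hnum hinv
  have h3 : Tendsto (fun y => Real.exp (-y * Real.cos y / Real.sin y))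
      (nhdsWithin Real.pi (Set.Iio Real.pi)) atTop :=
    Real.tendsto_exp_atTop.comp h2
  exact h1.atTop_mul_atTop₀ h3

theorem exists_unstable_root_of_b_le_neg_pi_div_two (b : ℝ)
    (hb : b ≤ -(Real.pi / 2)) :
    ∃ lam : ℂ, lam = (b : ℂ) * Complex.exp (-lam) ∧ 0 ≤ lam.re := by
  -- find y₁ ∈ (π/2, π) with fAux y₁ ≥ -b
  have hev : ∀ᶠ y in nhdsWithin Real.pi (Set.Iio Real.pi),
      -b ≤ fAux y ∧ y ∈ Set.Ioo (Real.pi / 2) Real.pi := by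
    filter_upwards [fAux_tendsto.eventually (eventually_ge_atTop (-b)),
      Ioo_mem_nhdsLT_of_mem (Set.mem_Ioc.mpr ⟨(half_lt_self Real.pi_pos), le_refl _⟩)] with y h1 h2
    exact ⟨h1, h2⟩
  obtain ⟨y₁, hfy₁, hy₁⟩ := hev.exists
  -- continuity on [π/2, y₁]
  have hsinpos : ∀ y ∈ Set.Icc (Real.pi / 2) y₁, 0 < Real.sin y := fun y hy =>
    Real.sin_pos_of_pos_of_lt_pi (lt_of_lt_of_le (by positivity) hy.1)
      (lt_of_le_of_lt hy.2 hy₁.2)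
  have hcont : ContinuousOn fAux (Set.Icc (Real.pi / 2) y₁) := by
    apply ContinuousOn.mul
    · exact ContinuousOn.div continuousOn_id Real.continuous_sin.continuousOn
        (fun y hy => (hsinpos y hy).ne')
    · apply Real.continuous_exp.comp_continuousOn
      exact ContinuousOn.div (continuousOn_id.neg.mul Real.continuous_cos.continuousOn)
        Real.continuous_sin.continuousOn (fun y hy => (hsinpos y hy).ne')
  have hfa : fAux (Real.pi / 2) = Real.pi / 2 := by
    simp [fAux, Real.sin_pi_div_two, Real.cos_pi_div_two]
  have hsub : Set.Icc (fAux (Real.pi / 2)) (fAux y₁) ⊆ fAux '' Set.Icc (Real.pi / 2) y₁ :=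
    intermediate_value_Icc hy₁.1.le hcont
  have hmem : -b ∈ Set.Icc (fAux (Real.pi / 2)) (fAux y₁) := by
    rw [hfa]; exact ⟨by linarith, hfy₁⟩
  obtain ⟨y, hy, hfy⟩ := hsub hmem
  -- setup
  have hsy : 0 < Real.sin y := hsinpos y hy
  have hcy : Real.cos y ≤ 0 := by
    apply Real.cos_nonpos_of_pi_div_two_le_of_le hy.1
    have := hy₁.2
    have := hy.2
    linarith [Real.pi_pos]
  have hypos : 0 < y := lt_of_lt_of_le (by positivity) hy.1
  set x : ℝ := -y * Real.cos y / Real.sin y with hx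
  have hxnn : 0 ≤ x := by
    apply div_nonneg _ hsy.le
    have : 0 ≤ -Real.cos y := by linarith
    nlinarith
  have hbeq : b = -(y / Real.sin y * Real.exp x) := by
    have : fAux y = -b := hfy
    unfold fAux at this
    rw [← hx] at this
    linarith
  refine ⟨⟨x, y⟩, ?_, hxnn⟩
  have hexp : Real.exp (-x) * Real.exp x = 1 := by
    rw [← Real.exp_add]; simp
  have key : ∀ e ei c : ℝ, e * ei = 1 →
      -(y / Real.sin y * e) * (ei * c) = -y * c / Real.sin y := by
    intro e ei c h
    field_simp [hsy.ne']
    rw [h]; ring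
  have hee : Real.exp x * Real.exp (-x) = 1 := by rw [← Real.exp_add]; simp
  apply Complex.ext
  · simp only [Complex.mul_re, Complex.ofReal_re, Complex.ofReal_im, Complex.exp_re,
      Complex.exp_im, Complex.neg_re, Complex.neg_im, zero_mul, sub_zero]
    show x = b * (Real.exp (-x) * Real.cos (-y))
    rw [hbeq, Real.cos_neg, key _ _ _ hee]
  · simp only [Complex.mul_im, Complex.ofReal_re, Complex.ofReal_im, Complex.exp_re,
      Complex.exp_im, Complex.neg_re, Complex.neg_im, zero_mul, add_zero]
    show y = b * (Real.exp (-x) * Real.sin (-y))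
    rw [hbeq, Real.sin_neg]
    have : -(y / Real.sin y * Real.exp x) * (Real.exp (-x) * -Real.sin y)
        = y / Real.sin y * Real.sin y * (Real.exp x * Real.exp (-x)) := by ring
    rw [this, hee, mul_one, div_mul_cancel₀ _ hsy.ne']
end

section
/- The function φ ↦ -φ/sin(φ) is strictly decreasing on (0, π). -/
open Real

lemma sin_sub_mul_cos_pos {x : ℝ} (hx : 0 < x) (hx' : x < π) :
    0 < Real.sin x - x * Real.cos x := by
  have hs : 0 < Real.sin x := Real.sin_pos_of_pos_of_lt_pi hx hx'
  rcases le_or_gt (Real.cos x) 0 with hc | hc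
  · nlinarith
  · have hx2 : x < π / 2 := by
      by_contra h
      push_neg at h
      have := Real.cos_nonpos_of_pi_div_two_le_of_le h (by linarith [Real.pi_pos])
      linarith
    have := Real.lt_tan hx hx2
    rw [Real.tan_eq_sin_div_cos, lt_div_iff₀ hc] at this
    linarith

lemma mono_aux : StrictMonoOn (fun φ : ℝ => φ / Real.sin φ) (Set.Ioo 0 Real.pi) := by
  have hd : ∀ x ∈ interior (Set.Ioo (0:ℝ) π),
      0 < deriv (fun φ : ℝ => φ / Real.sin φ) x := by
    intro x hx
    rw [interior_Ioo] at hx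
    obtain ⟨hx0, hxpi⟩ := hx
    have hs : 0 < Real.sin x := Real.sin_pos_of_pos_of_lt_pi hx0 hxpi
    have h1 : HasDerivAt (fun φ : ℝ => φ / Real.sin φ)
        ((1 * Real.sin x - x * Real.cos x) / (Real.sin x)^2) x :=
      (hasDerivAt_id x).div (Real.hasDerivAt_sin x) hs.ne'
    rw [h1.deriv]
    have h2 := sin_sub_mul_cos_pos hx0 hxpi
    have h3 : (0:ℝ) < (Real.sin x)^2 := by positivity
    rw [one_mul]
    exact div_pos h2 h3
  exact StrictMonoOn.mono (strictMonoOn_of_deriv_pos (convex_Ioo 0 π)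
    (by
      apply ContinuousOn.div continuousOn_id Real.continuousOn_sin
      intro x hx
      exact (Real.sin_pos_of_pos_of_lt_pi hx.1 hx.2).ne') hd) subset_rfl

theorem b_param_strictAntiOn :
    StrictAntiOn (fun φ : ℝ => -(φ / Real.sin φ)) (Set.Ioo 0 Real.pi) := by
  intro a ha b hb hab
  simpa using neg_lt_neg (mono_aux ha hb hab)
end

section
/- Suppose μ ≥ 0, φ_d ≥ 0, φ_r ≥ 0, σ > 0 and (φ_d + φ_r)·σ < π/2. Then every complex root λ of the characteristic equation λ = -μ - (φ_d + φ_r)·e^{-σλ} satisfies Re(λ) < 0. -/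
theorem infected_linearization_stable (μ φd φr σ : ℝ)
    (hμ : 0 ≤ μ) (hφd : 0 ≤ φd) (hφr : 0 ≤ φr) (hσ : 0 < σ)
    (hpos : 0 < μ ∨ 0 < φd + φr)
    (hbound : (φd + φr) * σ < Real.pi / 2) :
    ∀ lam : ℂ, lam = -(μ : ℂ) - ((φd + φr : ℝ) : ℂ) * Complex.exp (-(σ : ℂ) * lam) →
      lam.re < 0 := by
  intro lam heq
  by_contra hxneg
  push_neg at hxneg
  have hφ0 : 0 ≤ φd + φr := by positivity
  rw [Complex.ext_iff] at heq
  obtain ⟨hre, him⟩ := heq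
  simp only [Complex.sub_re, Complex.neg_re, Complex.ofReal_re, Complex.mul_re,
    Complex.ofReal_im, Complex.exp_re, Complex.exp_im, Complex.mul_im,
    Complex.sub_im, Complex.neg_im, Complex.ofReal_im, zero_mul, mul_zero,
    sub_zero, zero_sub, neg_zero, neg_mul, neg_neg, add_zero, zero_add,
    Real.cos_neg, Real.sin_neg, mul_neg] at hre him
  have hexp0 : (0:ℝ) < Real.exp (-(σ * lam.re)) := Real.exp_pos _
  have hexp1 : Real.exp (-(σ * lam.re)) ≤ 1 := Real.exp_le_one_iff.mpr (by nlinarith)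
  have hsin : |Real.sin (σ * lam.im)| ≤ 1 := Real.abs_sin_le_one _
  have hyabs : |lam.im| ≤ φd + φr := by
    conv_lhs => rw [him]
    rw [abs_mul, abs_mul, abs_of_nonneg hφ0, abs_of_nonneg hexp0.le]
    nlinarith [mul_nonneg (mul_nonneg hφ0 hexp0.le) (sub_nonneg.mpr hsin), mul_nonneg hφ0 (sub_nonneg.mpr hexp1)]
  have habs : |σ * lam.im| < Real.pi / 2 := by
    rw [abs_mul, abs_of_nonneg hσ.le]
    calc σ * |lam.im| ≤ σ * (φd + φr) := mul_le_mul_of_nonneg_left hyabs hσ.le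
      _ < Real.pi / 2 := by linarith [hbound]
  have hcos : 0 < Real.cos (σ * lam.im) := by
    obtain ⟨h1, h2⟩ := abs_lt.mp habs
    exact Real.cos_pos_of_mem_Ioo ⟨h1, h2⟩
  rcases hpos with hm | hf
  · nlinarith [mul_nonneg hφ0 (mul_nonneg hexp0.le hcos.le)]
  · nlinarith [mul_pos hf (mul_pos hexp0 hcos)]
end
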